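/- arXiv:1606.07717 — 2 statements merged into one kernel-verified Lean document; each statement's English description precedes it below -/
import Mathlib

section
/- (PDE part of Theorem 1.) Let k_f, k_b, k_d ≥ 0, let α, β, γ be pairwise distinct real numbers satisfying the characteristic system for parameters k_f, k_b, k_d, and let r0 > 1. Then the Green's function P(r,t) satisfies ∂P/∂t(r,t) = ∂²P/∂r²(r,t) + (2/r)·∂P/∂r(r,t) − k_d·P(r,t) for all r > 1 and all t > 0. -/
open Real MeasureTheory Set Filter

set_option maxHeartbeats 2000000


/-- The complementary error function `erfc(x) = (2/√π)·∫_x^∞ exp(−u²) du`. -/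
noncomputable def erfc (x : ℝ) : ℝ :=
  (2 / Real.sqrt Real.pi) * ∫ u in Set.Ioi x, Real.exp (-u ^ 2)

/-- `W(n,m) = exp(2·n·m + m²)·erfc(n+m)`. -/
noncomputable def W (n m : ℝ) : ℝ :=
  Real.exp (2 * n * m + m ^ 2) * erfc (n + m)

/-- `η₁ = α(γ+α)(α+β)/((γ−α)(α−β))`. -/
noncomputable def eta1 (α β γ : ℝ) : ℝ := α * (γ + α) * (α + β) / ((γ - α) * (α - β))

/-- `η₂ = β(γ+β)(α+β)/((β−γ)(α−β))`. -/
noncomputable def eta2 (α β γ : ℝ) : ℝ := β * (γ + β) * (α + β) / ((β - γ) * (α - β))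

/-- `η₃ = γ(γ+β)(α+γ)/((β−γ)(γ−α))`. -/
noncomputable def eta3 (α β γ : ℝ) : ℝ := γ * (γ + β) * (α + γ) / ((β - γ) * (γ - α))

/-- The Green's function of the reactive-receiver diffusion channel (Theorem 1):
`P(r,t) = exp(−k_d·t)·[ (1/(8π·r·r0·√(π·t)))·( exp(−(r−r0)²/(4t)) + exp(−(r+r0−2)²/(4t)) )
  − (1/(4π·r·r0))·( η₁·W((r+r0−2)/(2√t), α√t) + η₂·W((r+r0−2)/(2√t), β√t)
  + η₃·W((r+r0−2)/(2√t), γ√t) ) ]`. -/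
noncomputable def greenP (k_d r0 α β γ : ℝ) (r t : ℝ) : ℝ :=
  Real.exp (-k_d * t) *
    ((1 / (8 * Real.pi * r * r0 * Real.sqrt (Real.pi * t))) *
        (Real.exp (-(r - r0) ^ 2 / (4 * t)) + Real.exp (-(r + r0 - 2) ^ 2 / (4 * t)))
      - (1 / (4 * Real.pi * r * r0)) *
        (eta1 α β γ * W ((r + r0 - 2) / (2 * Real.sqrt t)) (α * Real.sqrt t)
          + eta2 α β γ * W ((r + r0 - 2) / (2 * Real.sqrt t)) (β * Real.sqrt t)
          + eta3 α β γ * W ((r + r0 - 2) / (2 * Real.sqrt t)) (γ * Real.sqrt t)))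

lemma integrable_ens : Integrable (fun u : ℝ => Real.exp (-u ^ 2)) := by
  simpa using integrable_exp_neg_mul_sq (by norm_num : (0:ℝ) < 1)

lemma hasDerivAt_erfc (x : ℝ) :
    HasDerivAt erfc (-(2 / Real.sqrt Real.pi) * Real.exp (-x ^ 2)) x := by
  have hint : ∀ y : ℝ, (∫ u in Set.Ioi y, Real.exp (-u ^ 2))
      = (∫ u : ℝ, Real.exp (-u ^ 2)) - ((∫ u in Set.Iic (0:ℝ), Real.exp (-u ^ 2))
        + ∫ u in (0:ℝ)..y, Real.exp (-u ^ 2)) := by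
    intro y
    have h1 : (∫ u in Set.Iic y, Real.exp (-u ^ 2)) + (∫ u in Set.Ioi y, Real.exp (-u ^ 2))
        = ∫ u : ℝ, Real.exp (-u ^ 2) := by
      simpa [compl_Iic] using integral_add_compl (measurableSet_Iic (a := y)) integrable_ens
    have h2 : (∫ u in Set.Iic y, Real.exp (-u ^ 2)) - (∫ u in Set.Iic (0:ℝ), Real.exp (-u ^ 2))
        = ∫ u in (0:ℝ)..y, Real.exp (-u ^ 2) :=
      intervalIntegral.integral_Iic_sub_Iic integrable_ens.integrableOn integrable_ens.integrableOn
    linarith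
  have hD : HasDerivAt (fun y : ℝ => ∫ u in (0:ℝ)..y, Real.exp (-u ^ 2))
      (Real.exp (-x ^ 2)) x := by
    refine intervalIntegral.integral_hasDerivAt_right
      (integrable_ens.intervalIntegrable) ?_ ?_
    · exact (Real.continuous_exp.comp (continuous_pow 2).neg).stronglyMeasurableAtFilter _ _
    · exact (Real.continuous_exp.comp (continuous_pow 2).neg).continuousAt
  have : HasDerivAt (fun y : ℝ => (2 / Real.sqrt Real.pi) *
      ((∫ u : ℝ, Real.exp (-u ^ 2)) - ((∫ u in Set.Iic (0:ℝ), Real.exp (-u ^ 2))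
        + ∫ u in (0:ℝ)..y, Real.exp (-u ^ 2))))
      (-(2 / Real.sqrt Real.pi) * Real.exp (-x ^ 2)) x := by
    have := ((hD.const_add (∫ u in Set.Iic (0:ℝ), Real.exp (-u ^ 2))).const_sub
      (∫ u : ℝ, Real.exp (-u ^ 2))).const_mul (2 / Real.sqrt Real.pi)
    refine this.congr_deriv ?_
    ring
  refine this.congr_of_eventuallyEq ?_
  filter_upwards with y
  simp [erfc, hint y]

/-- r-derivative of the direct gaussian -/
lemma hasDerivAt_Ea (r0 t : ℝ) (ht : 0 < t) (r : ℝ) :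
    HasDerivAt (fun r' => Real.exp (-(r' - r0) ^ 2 / (4 * t)))
      (Real.exp (-(r - r0) ^ 2 / (4 * t)) * (-(r - r0) / (2 * t))) r := by
  have h : HasDerivAt (fun r' => -(r' - r0) ^ 2 / (4 * t)) (-(r - r0) / (2 * t)) r := by
    have h2 := (((hasDerivAt_id r).sub_const r0).pow 2).neg.div_const (4 * t)
    refine h2.congr_deriv ?_
    simp only [id]
    field_simp
    ring
  exact h.exp

/-- r-derivative of the image gaussian -/
lemma hasDerivAt_Eb (r0 t : ℝ) (ht : 0 < t) (r : ℝ) :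
    HasDerivAt (fun r' => Real.exp (-(r' + r0 - 2) ^ 2 / (4 * t)))
      (Real.exp (-(r + r0 - 2) ^ 2 / (4 * t)) * (-(r + r0 - 2) / (2 * t))) r := by
  have h : HasDerivAt (fun r' => -(r' + r0 - 2) ^ 2 / (4 * t)) (-(r + r0 - 2) / (2 * t)) r := by
    have h2 := ((((hasDerivAt_id r).add_const r0).sub_const 2).pow 2).neg.div_const (4 * t)
    refine h2.congr_deriv ?_
    simp only [id]
    field_simp
    ring
  exact h.exp

/-- r-derivative of the W term -/
lemma hasDerivAt_W_r (r0 t a : ℝ) (ht : 0 < t) (r : ℝ) :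
    HasDerivAt (fun r' => W ((r' + r0 - 2) / (2 * Real.sqrt t)) (a * Real.sqrt t))
      (a * W ((r + r0 - 2) / (2 * Real.sqrt t)) (a * Real.sqrt t)
        - Real.exp (-(r + r0 - 2) ^ 2 / (4 * t)) / (Real.sqrt t * Real.sqrt Real.pi)) r := by
  have hs : 0 < Real.sqrt t := Real.sqrt_pos.mpr ht
  have hst : Real.sqrt t ^ 2 = t := Real.sq_sqrt ht.le
  have hsp : 0 < Real.sqrt Real.pi := Real.sqrt_pos.mpr Real.pi_pos
  have hn : HasDerivAt (fun r' => (r' + r0 - 2) / (2 * Real.sqrt t))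
      (1 / (2 * Real.sqrt t)) r := by
    simpa using (((hasDerivAt_id r).add_const r0).sub_const 2).div_const (2 * Real.sqrt t)
  have h1 : HasDerivAt
      (fun r' => Real.exp (2 * ((r' + r0 - 2) / (2 * Real.sqrt t)) * (a * Real.sqrt t)
        + (a * Real.sqrt t) ^ 2))
      (Real.exp (2 * ((r + r0 - 2) / (2 * Real.sqrt t)) * (a * Real.sqrt t)
        + (a * Real.sqrt t) ^ 2) * (2 * (1 / (2 * Real.sqrt t)) * (a * Real.sqrt t))) r := by
    have h0 : HasDerivAt
        (fun r' => 2 * ((r' + r0 - 2) / (2 * Real.sqrt t)) * (a * Real.sqrt t)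
          + (a * Real.sqrt t) ^ 2)
        (2 * (1 / (2 * Real.sqrt t)) * (a * Real.sqrt t)) r := by
      exact ((hn.const_mul 2).mul_const (a * Real.sqrt t)).add_const ((a * Real.sqrt t) ^ 2)
    exact h0.exp
  have h2 : HasDerivAt (fun r' => erfc ((r' + r0 - 2) / (2 * Real.sqrt t) + a * Real.sqrt t))
      (-(2 / Real.sqrt Real.pi) *
        Real.exp (-((r + r0 - 2) / (2 * Real.sqrt t) + a * Real.sqrt t) ^ 2)
          * (1 / (2 * Real.sqrt t))) r := by
    have := (hasDerivAt_erfc ((r + r0 - 2) / (2 * Real.sqrt t) + a * Real.sqrt t)).comp r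
      (hn.add_const (a * Real.sqrt t))
    exact this
  have htot := h1.mul h2
  simp only [W]
  refine htot.congr_deriv ?_
  have key : Real.exp (-(r + r0 - 2) ^ 2 / (4 * t))
      = Real.exp (2 * ((r + r0 - 2) / (2 * Real.sqrt t)) * (a * Real.sqrt t)
          + (a * Real.sqrt t) ^ 2)
        * Real.exp (-((r + r0 - 2) / (2 * Real.sqrt t) + a * Real.sqrt t) ^ 2) := by
    rw [← Real.exp_add]
    congr 1
    set s := Real.sqrt t
    rw [← hst]
    field_simp
    ring
  rw [key]
  set s := Real.sqrt t
  set sp := Real.sqrt Real.pi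
  field_simp
  ring

lemma hasDerivAt_gauss_t (x t : ℝ) (ht : 0 < t) :
    HasDerivAt (fun t' => Real.exp (-x ^ 2 / (4 * t')))
      (Real.exp (-x ^ 2 / (4 * t)) * (x ^ 2 / (4 * t ^ 2))) t := by
  have h : HasDerivAt (fun t' => -x ^ 2 / (4 * t')) (x ^ 2 / (4 * t ^ 2)) t := by
    have h2 := (hasDerivAt_const t (-x ^ 2)).div ((hasDerivAt_id t).const_mul 4)
      (by simp [ht.ne'] : (4:ℝ) * t ≠ 0)
    refine h2.congr_deriv ?_
    simp only [id]
    field_simp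
    ring
  exact h.exp

lemma hasDerivAt_W_t (c a t : ℝ) (ht : 0 < t) :
    HasDerivAt (fun t' => W (c / (2 * Real.sqrt t')) (a * Real.sqrt t'))
      (a ^ 2 * W (c / (2 * Real.sqrt t)) (a * Real.sqrt t)
        + Real.exp (-c ^ 2 / (4 * t)) * (c / (2 * t * Real.sqrt t * Real.sqrt Real.pi)
            - a / (Real.sqrt t * Real.sqrt Real.pi))) t := by
  have hs : 0 < Real.sqrt t := Real.sqrt_pos.mpr ht
  have hst : Real.sqrt t ^ 2 = t := Real.sq_sqrt ht.le
  have hsp : 0 < Real.sqrt Real.pi := Real.sqrt_pos.mpr Real.pi_pos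
  have hWg : ∀ t' ∈ Set.Ioi (0:ℝ), W (c / (2 * Real.sqrt t')) (a * Real.sqrt t')
      = Real.exp (a * c + a ^ 2 * t') * erfc (c / (2 * Real.sqrt t') + a * Real.sqrt t') := by
    intro t' ht'
    have hs' : (0:ℝ) < Real.sqrt t' := Real.sqrt_pos.mpr ht'
    have hst' : Real.sqrt t' ^ 2 = t' := Real.sq_sqrt (le_of_lt ht')
    simp only [W]
    congr 2
    set s' := Real.sqrt t'
    rw [← hst']
    field_simp
  have hsq := Real.hasDerivAt_sqrt ht.ne'
  have hu : HasDerivAt (fun t' => c / (2 * Real.sqrt t') + a * Real.sqrt t')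
      ((0 * (2 * Real.sqrt t) - c * (2 * (1 / (2 * Real.sqrt t)))) / (2 * Real.sqrt t) ^ 2
        + a * (1 / (2 * Real.sqrt t))) t :=
    ((hasDerivAt_const t c).div (hsq.const_mul 2)
      (by simp [hs.ne'] : 2 * Real.sqrt t ≠ 0)).add (hsq.const_mul a)
  have hexp : HasDerivAt (fun t' => Real.exp (a * c + a ^ 2 * t'))
      (Real.exp (a * c + a ^ 2 * t) * a ^ 2) t := by
    have h0 : HasDerivAt (fun t' => a * c + a ^ 2 * t') (a ^ 2) t := by
      simpa using ((hasDerivAt_id t).const_mul (a ^ 2)).const_add (a * c)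
    exact h0.exp
  have herfc : HasDerivAt (fun t' => erfc (c / (2 * Real.sqrt t') + a * Real.sqrt t'))
      (-(2 / Real.sqrt Real.pi) *
          Real.exp (-(c / (2 * Real.sqrt t) + a * Real.sqrt t) ^ 2) *
        ((0 * (2 * Real.sqrt t) - c * (2 * (1 / (2 * Real.sqrt t)))) / (2 * Real.sqrt t) ^ 2
          + a * (1 / (2 * Real.sqrt t)))) t := by
    have := (hasDerivAt_erfc (c / (2 * Real.sqrt t) + a * Real.sqrt t)).comp t hu
    exact this
  have hg := hexp.mul herfc
  have hfin := hg.congr_of_eventuallyEq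
    (Filter.eventuallyEq_of_mem (Ioi_mem_nhds ht) hWg)
  refine hfin.congr_deriv ?_
  rw [hWg t (mem_Ioi.mpr ht)]
  have key : Real.exp (-c ^ 2 / (4 * t))
      = Real.exp (a * c + a ^ 2 * t)
        * Real.exp (-(c / (2 * Real.sqrt t) + a * Real.sqrt t) ^ 2) := by
    rw [← Real.exp_add]
    congr 1
    set s := Real.sqrt t
    rw [← hst]
    field_simp
    ring
  rw [key]
  set s := Real.sqrt t
  set sp := Real.sqrt Real.pi
  rw [← hst]
  field_simp
  ring


/-- Closed form of the first radial derivative of `greenP`. -/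
noncomputable def greenPr (k_d r0 α β γ t r : ℝ) : ℝ :=
  Real.exp (-k_d * t) *
    (((-(r - r0) * Real.exp (-(r - r0) ^ 2 / (4 * t)) - (r + r0 - 2) * Real.exp (-(r + r0 - 2) ^ 2 / (4 * t))) / (2 * t)) / (8 * Real.pi * r * r0 * (Real.sqrt Real.pi * Real.sqrt t))
      - (Real.exp (-(r - r0) ^ 2 / (4 * t)) + Real.exp (-(r + r0 - 2) ^ 2 / (4 * t))) / (8 * Real.pi * r ^ 2 * r0 * (Real.sqrt Real.pi * Real.sqrt t))
      - (eta1 α β γ * (α * W ((r + r0 - 2) / (2 * Real.sqrt t)) (α * Real.sqrt t) - Real.exp (-(r + r0 - 2) ^ 2 / (4 * t)) / (Real.sqrt t * Real.sqrt Real.pi)) + eta2 α β γ * (β * W ((r + r0 - 2) / (2 * Real.sqrt t)) (β * Real.sqrt t) - Real.exp (-(r + r0 - 2) ^ 2 / (4 * t)) / (Real.sqrt t * Real.sqrt Real.pi)) + eta3 α β γ * (γ * W ((r + r0 - 2) / (2 * Real.sqrt t)) (γ * Real.sqrt t) - Real.exp (-(r + r0 - 2) ^ 2 / (4 * t)) /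 (Real.sqrt t * Real.sqrt Real.pi))) / (4 * Real.pi * r * r0)
      + (eta1 α β γ * W ((r + r0 - 2) / (2 * Real.sqrt t)) (α * Real.sqrt t) + eta2 α β γ * W ((r + r0 - 2) / (2 * Real.sqrt t)) (β * Real.sqrt t) + eta3 α β γ * W ((r + r0 - 2) / (2 * Real.sqrt t)) (γ * Real.sqrt t)) / (4 * Real.pi * r ^ 2 * r0))

lemma hasDerivAt_greenP_r (k_d r0 α β γ t : ℝ) (ht : 0 < t) (hr0 : 0 < r0)
    (r : ℝ) (hr : 0 < r) :
    HasDerivAt (fun r' => greenP k_d r0 α β γ r' t) (greenPr k_d r0 α β γ t r) r := by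
  have hs : 0 < Real.sqrt t := Real.sqrt_pos.mpr ht
  have hst : Real.sqrt t ^ 2 = t := Real.sq_sqrt ht.le
  have hsp : 0 < Real.sqrt Real.pi := Real.sqrt_pos.mpr Real.pi_pos
  have hq : 0 < Real.sqrt (Real.pi * t) := Real.sqrt_pos.mpr (mul_pos Real.pi_pos ht)
  have hEa := hasDerivAt_Ea r0 t ht r
  have hEb := hasDerivAt_Eb r0 t ht r
  have hWa := hasDerivAt_W_r r0 t α ht r
  have hWb := hasDerivAt_W_r r0 t β ht r
  have hWc := hasDerivAt_W_r r0 t γ ht r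
  have hden1 : HasDerivAt (fun r' => 8 * Real.pi * r' * r0 * Real.sqrt (Real.pi * t))
      (8 * Real.pi * 1 * r0 * Real.sqrt (Real.pi * t)) r :=
    (((hasDerivAt_id r).const_mul (8 * Real.pi)).mul_const r0).mul_const _
  have hpos1 : (0:ℝ) < 8 * Real.pi * r * r0 * Real.sqrt (Real.pi * t) := by positivity
  have hinv1 := (hasDerivAt_const r (1:ℝ)).div hden1 hpos1.ne'
  have hden2 : HasDerivAt (fun r' => 4 * Real.pi * r' * r0) (4 * Real.pi * 1 * r0) r :=
    ((hasDerivAt_id r).const_mul (4 * Real.pi)).mul_const r0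
  have hpos2 : (0:ℝ) < 4 * Real.pi * r * r0 := by positivity
  have hinv2 := (hasDerivAt_const r (1:ℝ)).div hden2 hpos2.ne'
  have hWsum := ((hWa.const_mul (eta1 α β γ)).add (hWb.const_mul (eta2 α β γ))).add
    (hWc.const_mul (eta3 α β γ))
  have htot := ((hinv1.mul (hEa.add hEb)).sub (hinv2.mul hWsum)).const_mul
    (Real.exp (-k_d * t))
  simp only [greenP, greenPr]
  refine htot.congr_deriv ?_
  simp only [Real.sqrt_mul Real.pi_pos.le]
  set s := Real.sqrt t
  set sp := Real.sqrt Real.pi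
  simp only [id, Pi.add_apply, Pi.sub_apply, Pi.mul_apply, Pi.div_apply, Pi.neg_apply]
  generalize Real.exp (-(r - r0) ^ 2 / (4 * t)) = Ea
  generalize Real.exp (-(r + r0 - 2) ^ 2 / (4 * t)) = Eb
  generalize Real.exp (-k_d * t) = Ek
  rw [← hst]
  field_simp
  ring

lemma hasDerivAt_greenPr (k_d r0 α β γ t : ℝ) (ht : 0 < t) (hr0 : 0 < r0)
    (r : ℝ) (hr : 0 < r) :
    HasDerivAt (fun r' => greenPr k_d r0 α β γ t r')
      (Real.exp (-k_d * t) *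
    (((-Real.exp (-(r - r0) ^ 2 / (4 * t)) + (r - r0) ^ 2 * Real.exp (-(r - r0) ^ 2 / (4 * t)) / (2 * t) - Real.exp (-(r + r0 - 2) ^ 2 / (4 * t)) + (r + r0 - 2) ^ 2 * Real.exp (-(r + r0 - 2) ^ 2 / (4 * t)) / (2 * t)) / (2 * t)) / (8 * Real.pi * r * r0 * (Real.sqrt Real.pi * Real.sqrt t))
      - ((-(r - r0) * Real.exp (-(r - r0) ^ 2 / (4 * t)) - (r + r0 - 2) * Real.exp (-(r + r0 - 2) ^ 2 / (4 * t))) / (2 * t)) / (8 * Real.pi * r ^ 2 * r0 * (Real.sqrt Real.pi * Real.sqrt t))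
      - (Real.exp (-(r - r0) ^ 2 / (4 * t)) * (-(r - r0) / (2 * t)) + Real.exp (-(r + r0 - 2) ^ 2 / (4 * t)) * (-(r + r0 - 2) / (2 * t))) / (8 * Real.pi * r ^ 2 * r0 * (Real.sqrt Real.pi * Real.sqrt t))
      + 2 * (Real.exp (-(r - r0) ^ 2 / (4 * t)) + Real.exp (-(r + r0 - 2) ^ 2 / (4 * t))) / (8 * Real.pi * r ^ 3 * r0 * (Real.sqrt Real.pi * Real.sqrt t))
      - (eta1 α β γ * (α ^ 2 * W ((r + r0 - 2) / (2 * Real.sqrt t)) (α * Real.sqrt t) - α * Real.exp (-(r + r0 - 2) ^ 2 / (4 * t)) / (Real.sqrt t * Real.sqrt Real.pi) + (r + r0 - 2) * Real.exp (-(r + r0 - 2) ^ 2 / (4 * t)) / (2 * t * Real.sqrt t * Real.sqrt Real.pi))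
        + eta2 α β γ * (β ^ 2 * W ((r + r0 - 2) / (2 * Real.sqrt t)) (β * Real.sqrt t) - β * Real.exp (-(r + r0 - 2) ^ 2 / (4 * t)) / (Real.sqrt t * Real.sqrt Real.pi) + (r + r0 - 2) * Real.exp (-(r + r0 - 2) ^ 2 / (4 * t)) / (2 * t * Real.sqrt t * Real.sqrt Real.pi))
        + eta3 α β γ * (γ ^ 2 * W ((r + r0 - 2) / (2 * Real.sqrt t)) (γ * Real.sqrt t) - γ * Real.exp (-(r + r0 - 2) ^ 2 / (4 * t)) / (Real.sqrt t * Real.sqrt Real.pi) + (r + r0 - 2) * Real.exp (-(r + r0 - 2) ^ 2 / (4 * t)) / (2 * t * Real.sqrt t * Real.sqrt Real.pi))) / (4 * Real.pi * r * r0)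
      + (eta1 α β γ * (α * W ((r + r0 - 2) / (2 * Real.sqrt t)) (α * Real.sqrt t) - Real.exp (-(r + r0 - 2) ^ 2 / (4 * t)) / (Real.sqrt t * Real.sqrt Real.pi)) + eta2 α β γ * (β * W ((r + r0 - 2) / (2 * Real.sqrt t)) (β * Real.sqrt t) - Real.exp (-(r + r0 - 2) ^ 2 / (4 * t)) / (Real.sqrt t * Real.sqrt Real.pi)) + eta3 α β γ * (γ * W ((r + r0 - 2) / (2 * Real.sqrt t)) (γ * Real.sqrt t) - Real.exp (-(r + r0 - 2) ^ 2 / (4 * t)) / (Real.sqrt t * Real.sqrt Real.pi))) / (4 * Real.pi * r ^ 2 * r0)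
      + (eta1 α β γ * (α * W ((r + r0 - 2) / (2 * Real.sqrt t)) (α * Real.sqrt t) - Real.exp (-(r + r0 - 2) ^ 2 / (4 * t)) / (Real.sqrt t * Real.sqrt Real.pi)) + eta2 α β γ * (β * W ((r + r0 - 2) / (2 * Real.sqrt t)) (β * Real.sqrt t) - Real.exp (-(r + r0 - 2) ^ 2 / (4 * t)) / (Real.sqrt t * Real.sqrt Real.pi)) + eta3 α β γ * (γ * W ((r + r0 - 2) / (2 * Real.sqrt t)) (γ * Real.sqrt t) - Real.exp (-(r + r0 - 2) ^ 2 / (4 * t)) / (Real.sqrt t * Real.sqrt Real.pi))) / (4 * Real.pi * r ^ 2 * r0)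
      - 2 * (eta1 α β γ * W ((r + r0 - 2) / (2 * Real.sqrt t)) (α * Real.sqrt t) + eta2 α β γ * W ((r + r0 - 2) / (2 * Real.sqrt t)) (β * Real.sqrt t) + eta3 α β γ * W ((r + r0 - 2) / (2 * Real.sqrt t)) (γ * Real.sqrt t)) / (4 * Real.pi * r ^ 3 * r0))) r := by
  have hs : 0 < Real.sqrt t := Real.sqrt_pos.mpr ht
  have hst : Real.sqrt t ^ 2 = t := Real.sq_sqrt ht.le
  have hsp : 0 < Real.sqrt Real.pi := Real.sqrt_pos.mpr Real.pi_pos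
  have hEa := hasDerivAt_Ea r0 t ht r
  have hEb := hasDerivAt_Eb r0 t ht r
  have hWa := hasDerivAt_W_r r0 t α ht r
  have hWb := hasDerivAt_W_r r0 t β ht r
  have hWc := hasDerivAt_W_r r0 t γ ht r
  have hden1 : HasDerivAt
      (fun r' => 8 * Real.pi * r' * r0 * (Real.sqrt Real.pi * Real.sqrt t))
      (8 * Real.pi * 1 * r0 * (Real.sqrt Real.pi * Real.sqrt t)) r :=
    (((hasDerivAt_id r).const_mul (8 * Real.pi)).mul_const r0).mul_const _
  have hpos1 : (0:ℝ) < 8 * Real.pi * r * r0 * (Real.sqrt Real.pi * Real.sqrt t) := by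
    positivity
  have hden2 : HasDerivAt
      (fun r' => 8 * Real.pi * r' ^ 2 * r0 * (Real.sqrt Real.pi * Real.sqrt t))
      (8 * Real.pi * (2 * r ^ 1) * r0 * (Real.sqrt Real.pi * Real.sqrt t)) r := by
    have h0 : HasDerivAt (fun r' : ℝ => r' ^ 2) ((2:ℕ) * r ^ 1) r := hasDerivAt_pow 2 r
    exact ((h0.const_mul (8 * Real.pi)).mul_const r0).mul_const _
  have hpos2 : (0:ℝ) < 8 * Real.pi * r ^ 2 * r0 * (Real.sqrt Real.pi * Real.sqrt t) := by
    positivity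
  have hden3 : HasDerivAt (fun r' => 4 * Real.pi * r' * r0) (4 * Real.pi * 1 * r0) r :=
    ((hasDerivAt_id r).const_mul (4 * Real.pi)).mul_const r0
  have hpos3 : (0:ℝ) < 4 * Real.pi * r * r0 := by positivity
  have hden4 : HasDerivAt (fun r' => 4 * Real.pi * r' ^ 2 * r0)
      (4 * Real.pi * (2 * r ^ 1) * r0) r := by
    have h0 : HasDerivAt (fun r' : ℝ => r' ^ 2) ((2:ℕ) * r ^ 1) r := hasDerivAt_pow 2 r
    exact (h0.const_mul (4 * Real.pi)).mul_const r0
  have hpos4 : (0:ℝ) < 4 * Real.pi * r ^ 2 * r0 := by positivity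
  have hN := ((((hasDerivAt_id r).sub_const r0).neg.mul hEa).sub
    ((((hasDerivAt_id r).add_const r0).sub_const 2).mul hEb)).div_const (2 * t)
  have hT1 := hN.div hden1 hpos1.ne'
  have hT2 := (hEa.add hEb).div hden2 hpos2.ne'
  have hin1 := ((hWa.const_mul α).sub
    (hEb.div_const (Real.sqrt t * Real.sqrt Real.pi))).const_mul (eta1 α β γ)
  have hin2 := ((hWb.const_mul β).sub
    (hEb.div_const (Real.sqrt t * Real.sqrt Real.pi))).const_mul (eta2 α β γ)
  have hin3 := ((hWc.const_mul γ).sub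
    (hEb.div_const (Real.sqrt t * Real.sqrt Real.pi))).const_mul (eta3 α β γ)
  have hT3 := ((hin1.add hin2).add hin3).div hden3 hpos3.ne'
  have hWsum := ((hWa.const_mul (eta1 α β γ)).add (hWb.const_mul (eta2 α β γ))).add
    (hWc.const_mul (eta3 α β γ))
  have hT4 := hWsum.div hden4 hpos4.ne'
  have htot := (((hT1.sub hT2).sub hT3).add hT4).const_mul (Real.exp (-k_d * t))
  simp only [greenPr]
  refine htot.congr_deriv ?_
  set s := Real.sqrt t
  set sp := Real.sqrt Real.pi
  simp only [id, Pi.add_apply, Pi.sub_apply, Pi.mul_apply, Pi.div_apply, Pi.neg_apply]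
  generalize Real.exp (-(r - r0) ^ 2 / (4 * t)) = Ea
  generalize Real.exp (-(r + r0 - 2) ^ 2 / (4 * t)) = Eb
  generalize Real.exp (-k_d * t) = Ek
  rw [← hst]
  field_simp
  ring

lemma hasDerivAt_greenP_t (k_d r0 α β γ r : ℝ) (hr : 0 < r) (hr0 : 0 < r0)
    (t : ℝ) (ht : 0 < t) :
    HasDerivAt (fun t' => greenP k_d r0 α β γ r t')
      (Real.exp (-k_d * t) *
    (-k_d * ((Real.exp (-(r - r0) ^ 2 / (4 * t)) + Real.exp (-(r + r0 - 2) ^ 2 / (4 * t))) / (8 * Real.pi * r * r0 * (Real.sqrt Real.pi * Real.sqrt t)) - (eta1 α β γ * W ((r + r0 - 2) / (2 * Real.sqrt t)) (α * Real.sqrt t) + eta2 α β γ * W ((r + r0 - 2) / (2 * Real.sqrt t)) (β * Real.sqrt t) + eta3 α β γ * W ((r + r0 - 2) / (2 * Real.sqrt t)) (γ * Real.sqrt t)) / (4 * Real.pi * r * r0))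
      + (Real.exp (-(r - r0) ^ 2 / (4 * t)) * (r - r0) ^ 2 + Real.exp (-(r + r0 - 2) ^ 2 / (4 * t)) * (r + r0 - 2) ^ 2) / (4 * t ^ 2 * (8 * Real.pi * r * r0 * (Real.sqrt Real.pi * Real.sqrt t)))
      - (Real.exp (-(r - r0) ^ 2 / (4 * t)) + Real.exp (-(r + r0 - 2) ^ 2 / (4 * t))) / (16 * Real.pi * r * r0 * (Real.sqrt Real.pi * Real.sqrt t ^ 3))
      - (eta1 α β γ * (α ^ 2 * W ((r + r0 - 2) / (2 * Real.sqrt t)) (α * Real.sqrt t) + Real.exp (-(r + r0 - 2) ^ 2 / (4 * t)) * ((r + r0 - 2) / (2 * t * Real.sqrt t * Real.sqrt Real.pi) - α / (Real.sqrt t * Real.sqrt Real.pi)))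
        + eta2 α β γ * (β ^ 2 * W ((r + r0 - 2) / (2 * Real.sqrt t)) (β * Real.sqrt t) + Real.exp (-(r + r0 - 2) ^ 2 / (4 * t)) * ((r + r0 - 2) / (2 * t * Real.sqrt t * Real.sqrt Real.pi) - β / (Real.sqrt t * Real.sqrt Real.pi)))
        + eta3 α β γ * (γ ^ 2 * W ((r + r0 - 2) / (2 * Real.sqrt t)) (γ * Real.sqrt t) + Real.exp (-(r + r0 - 2) ^ 2 / (4 * t)) * ((r + r0 - 2) / (2 * t * Real.sqrt t * Real.sqrt Real.pi) - γ / (Real.sqrt t * Real.sqrt Real.pi)))) / (4 * Real.pi * r * r0))) t := by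
  have hs : 0 < Real.sqrt t := Real.sqrt_pos.mpr ht
  have hst : Real.sqrt t ^ 2 = t := Real.sq_sqrt ht.le
  have hsp : 0 < Real.sqrt Real.pi := Real.sqrt_pos.mpr Real.pi_pos
  have hfun : (fun t' => greenP k_d r0 α β γ r t')
      = (fun t' => Real.exp (-k_d * t') *
        ((1 / (8 * Real.pi * r * r0 * (Real.sqrt Real.pi * Real.sqrt t'))) *
            (Real.exp (-(r - r0) ^ 2 / (4 * t')) + Real.exp (-(r + r0 - 2) ^ 2 / (4 * t')))
          - (1 / (4 * Real.pi * r * r0)) *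
            (eta1 α β γ * W ((r + r0 - 2) / (2 * Real.sqrt t')) (α * Real.sqrt t')
              + eta2 α β γ * W ((r + r0 - 2) / (2 * Real.sqrt t')) (β * Real.sqrt t')
              + eta3 α β γ * W ((r + r0 - 2) / (2 * Real.sqrt t')) (γ * Real.sqrt t')))) := by
    funext u
    simp only [greenP, Real.sqrt_mul Real.pi_pos.le]
  rw [hfun]
  have hek : HasDerivAt (fun t' : ℝ => Real.exp (-k_d * t'))
      (Real.exp (-k_d * t) * (-k_d * 1)) t := ((hasDerivAt_id t).const_mul (-k_d)).exp
  have hsq := Real.hasDerivAt_sqrt ht.ne'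
  have hdenA : HasDerivAt
      (fun t' => 8 * Real.pi * r * r0 * (Real.sqrt Real.pi * Real.sqrt t'))
      (8 * Real.pi * r * r0 * (Real.sqrt Real.pi * (1 / (2 * Real.sqrt t)))) t :=
    (hsq.const_mul (Real.sqrt Real.pi)).const_mul (8 * Real.pi * r * r0)
  have hposA : (0:ℝ) < 8 * Real.pi * r * r0 * (Real.sqrt Real.pi * Real.sqrt t) := by
    positivity
  have hA := (hasDerivAt_const t (1:ℝ)).div hdenA hposA.ne'
  have hEat := hasDerivAt_gauss_t (r - r0) t ht
  have hEbt := hasDerivAt_gauss_t (r + r0 - 2) t ht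
  have hWta := hasDerivAt_W_t (r + r0 - 2) α t ht
  have hWtb := hasDerivAt_W_t (r + r0 - 2) β t ht
  have hWtc := hasDerivAt_W_t (r + r0 - 2) γ t ht
  have hS := ((hWta.const_mul (eta1 α β γ)).add (hWtb.const_mul (eta2 α β γ))).add
    (hWtc.const_mul (eta3 α β γ))
  have hrest := (hA.mul (hEat.add hEbt)).sub (hS.const_mul (1 / (4 * Real.pi * r * r0)))
  have htot := hek.mul hrest
  refine htot.congr_deriv ?_
  set s := Real.sqrt t
  set sp := Real.sqrt Real.pi
  simp only [id, Pi.add_apply, Pi.sub_apply, Pi.mul_apply, Pi.div_apply, Pi.neg_apply]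
  generalize Real.exp (-(r - r0) ^ 2 / (4 * t)) = Ea
  generalize Real.exp (-(r + r0 - 2) ^ 2 / (4 * t)) = Eb
  generalize Real.exp (-k_d * t) = Ek
  rw [← hst]
  simp only [Real.sqrt_sq hs.le]
  field_simp
  ring

/-- (PDE part of Theorem 1.) If `k_f, k_b, k_d ≥ 0`, `α, β, γ` are pairwise distinct reals
satisfying the characteristic system, and `r0 > 1`, then the Green's function satisfies
`∂P/∂t = ∂²P/∂r² + (2/r)·∂P/∂r − k_d·P` for all `r > 1` and `t > 0`. -/
theorem greenP_satisfies_radial_reaction_diffusion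
    (k_f k_b k_d : ℝ) (hkf : 0 ≤ k_f) (hkb : 0 ≤ k_b) (hkd : 0 ≤ k_d)
    (α β γ : ℝ) (hαβ : α ≠ β) (hβγ : β ≠ γ) (hαγ : α ≠ γ)
    (hsum : α + β + γ = 1 + k_f / (4 * Real.pi))
    (hprod2 : α * γ + β * γ + α * β = k_b - k_d)
    (hprod3 : α * β * γ = k_b - k_d * (1 + k_f / (4 * Real.pi)))
    (r0 : ℝ) (hr0 : 1 < r0) :
    ∀ r t : ℝ, 1 < r → 0 < t →
      deriv (fun t' : ℝ => greenP k_d r0 α β γ r t') t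
        = deriv (fun r' : ℝ => deriv (fun r'' : ℝ => greenP k_d r0 α β γ r'' t) r') r
          + (2 / r) * deriv (fun r' : ℝ => greenP k_d r0 α β γ r' t) r
          - k_d * greenP k_d r0 α β γ r t := by
  intro r t hr ht
  have hrp : (0:ℝ) < r := lt_trans one_pos hr
  have hr0p : (0:ℝ) < r0 := lt_trans one_pos hr0
  have hs : 0 < Real.sqrt t := Real.sqrt_pos.mpr ht
  have hst : Real.sqrt t ^ 2 = t := Real.sq_sqrt ht.le
  have hsp : 0 < Real.sqrt Real.pi := Real.sqrt_pos.mpr Real.pi_pos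
  have hev : (fun r' : ℝ => deriv (fun r'' : ℝ => greenP k_d r0 α β γ r'' t) r')
      =ᶠ[nhds r] (fun r' => greenPr k_d r0 α β γ t r') := by
    filter_upwards [eventually_gt_nhds hrp] with r' hr''
    exact (hasDerivAt_greenP_r k_d r0 α β γ t ht hr0p r' hr'').deriv
  rw [(hasDerivAt_greenP_t k_d r0 α β γ r hrp hr0p t ht).deriv,
    (hasDerivAt_greenP_r k_d r0 α β γ t ht hr0p r hrp).deriv,
    hev.deriv_eq, (hasDerivAt_greenPr k_d r0 α β γ t ht hr0p r hrp).deriv]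
  simp only [greenP, greenPr, Real.sqrt_mul Real.pi_pos.le]
  set s := Real.sqrt t
  set sp := Real.sqrt Real.pi
  generalize Real.exp (-(r - r0) ^ 2 / (4 * t)) = Ea
  generalize Real.exp (-(r + r0 - 2) ^ 2 / (4 * t)) = Eb
  generalize Real.exp (-k_d * t) = Ek
  rw [← hst]
  field_simp
  ring
end

section
/- (Corollary 3: asymptotic value of the impulse response without backward reaction and degradation.) Let k_f > 0 and r0 > 1, and set α = 1 + k_f/(4π). Then the channel impulse response P_AC(t) = (1/r0)·(k_f/(k_f+4π))·( erfc((r0−1)/(2√t)) − W((r0−1)/(2√t), α·√t) ) converges, as t → ∞, to the steady-state value (1/r0)·k_f/(k_f + 4π). -/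
open Filter Topology

open MeasureTheory

lemma expsq_integrableOn (x : ℝ) :
    IntegrableOn (fun u : ℝ => Real.exp (-u ^ 2)) (Set.Ioi x) := by
  have h : Integrable (fun u : ℝ => Real.exp (-(1:ℝ) * u ^ 2)) :=
    integrable_exp_neg_mul_sq one_pos
  simpa using h.integrableOn

lemma mul_expsq_integrableOn (x : ℝ) :
    IntegrableOn (fun u : ℝ => u * Real.exp (-u ^ 2)) (Set.Ioi x) := by
  have h : Integrable (fun u : ℝ => u * Real.exp (-(1:ℝ) * u ^ 2)) :=
    integrable_mul_exp_neg_mul_sq one_pos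
  simpa using h.integrableOn

lemma erfc_nonneg' (x : ℝ) : 0 ≤ erfc x := by
  apply mul_nonneg (by positivity)
  apply setIntegral_nonneg measurableSet_Ioi
  intro u _; positivity

lemma erfc_zero' : erfc 0 = 1 := by
  unfold erfc
  have h : (∫ u in Set.Ioi (0:ℝ), Real.exp (-u ^ 2)) = Real.sqrt Real.pi / 2 := by
    have := integral_gaussian_Ioi 1
    simpa using this
  rw [h]
  have hπ : Real.sqrt Real.pi ≠ 0 := by positivity
  field_simp

lemma erfc_le_one' {x : ℝ} (hx : 0 ≤ x) : erfc x ≤ 1 := by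
  rw [← erfc_zero']
  unfold erfc
  apply mul_le_mul_of_nonneg_left _ (by positivity)
  apply setIntegral_mono_set (expsq_integrableOn 0)
  · filter_upwards with u using by positivity
  · exact HasSubset.Subset.eventuallyLE (Set.Ioi_subset_Ioi hx)

lemma integral_split (x : ℝ) (hx : 0 ≤ x) :
    (∫ u in Set.Ioi (0:ℝ), Real.exp (-u ^ 2)) =
      (∫ u in Set.Ioc (0:ℝ) x, Real.exp (-u ^ 2)) + ∫ u in Set.Ioi x, Real.exp (-u ^ 2) := by
  rw [← setIntegral_union (Set.Ioc_disjoint_Ioi le_rfl) measurableSet_Ioi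
      ((expsq_integrableOn 0).mono_set Set.Ioc_subset_Ioi_self) (expsq_integrableOn x),
    Set.Ioc_union_Ioi_eq_Ioi hx]

lemma one_sub_le_erfc' {x : ℝ} (hx : 0 ≤ x) : 1 - 2 / Real.sqrt Real.pi * x ≤ erfc x := by
  have hsplit := integral_split x hx
  have hbound : (∫ u in Set.Ioc (0:ℝ) x, Real.exp (-u ^ 2)) ≤ x := by
    calc (∫ u in Set.Ioc (0:ℝ) x, Real.exp (-u ^ 2))
        ≤ ∫ _u in Set.Ioc (0:ℝ) x, (1:ℝ) := by
          apply setIntegral_mono_on ((expsq_integrableOn 0).mono_set Set.Ioc_subset_Ioi_self)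
            (integrableOn_const measure_Ioc_lt_top.ne) measurableSet_Ioc
          intro u _
          exact Real.exp_le_one_iff.2 (by nlinarith)
      _ = x := by simp [Real.volume_Ioc, hx]
  have h1 : erfc x = 1 - 2 / Real.sqrt Real.pi * ∫ u in Set.Ioc (0:ℝ) x, Real.exp (-u ^ 2) := by
    rw [← erfc_zero']
    unfold erfc
    rw [hsplit]; ring
  rw [h1]
  have hπ : (0:ℝ) ≤ 2 / Real.sqrt Real.pi := by positivity
  nlinarith

open MeasureTheory in
lemma integral_mul_expsq (c : ℝ) :
    (∫ u in Set.Ioi c, u * Real.exp (-u ^ 2)) = Real.exp (-c ^ 2) / 2 := by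
  have hderiv : ∀ x ∈ Set.Ici c, HasDerivAt (fun u : ℝ => -Real.exp (-u ^ 2) / 2)
      (x * Real.exp (-x ^ 2)) x := by
    intro x _
    have h1 : HasDerivAt (fun u : ℝ => -u ^ 2) (-(2 * x)) x := by
      simpa using ((hasDerivAt_pow 2 x).fun_neg)
    have h2 := (h1.exp).fun_neg.div_const 2
    refine h2.congr_deriv ?_
    ring
  have hint : IntegrableOn (fun u : ℝ => u * Real.exp (-u ^ 2)) (Set.Ioi c) :=
    mul_expsq_integrableOn c
  have htend : Filter.Tendsto (fun u : ℝ => -Real.exp (-u ^ 2) / 2) Filter.atTop (𝓝 0) := by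
    have h3 : Filter.Tendsto (fun u : ℝ => -u ^ 2) Filter.atTop Filter.atBot := by
      exact tendsto_neg_atTop_atBot.comp (tendsto_pow_atTop (α := ℝ) (n := 2) two_ne_zero)
    have := (Real.tendsto_exp_atBot.comp h3).neg.div_const 2
    simpa using this
  have := integral_Ioi_of_hasDerivAt_of_tendsto' hderiv hint htend
  rw [this]; ring

lemma erfc_le_exp {x : ℝ} (hx : 0 < x) :
    erfc x ≤ Real.exp (-x ^ 2) / (Real.sqrt Real.pi * x) := by
  have hπ : (0:ℝ) < Real.sqrt Real.pi := Real.sqrt_pos.2 Real.pi_pos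
  have hmono : (∫ u in Set.Ioi x, Real.exp (-u ^ 2))
      ≤ ∫ u in Set.Ioi x, u * Real.exp (-u ^ 2) / x := by
    apply setIntegral_mono_on (expsq_integrableOn x)
      ((mul_expsq_integrableOn x).div_const x) measurableSet_Ioi
    intro u hu
    have hux : (1:ℝ) ≤ u / x := (one_le_div hx).2 (le_of_lt hu)
    have := Real.exp_pos (-u ^ 2)
    rw [mul_comm, mul_div_assoc]
    nlinarith
  have hval : (∫ u in Set.Ioi x, u * Real.exp (-u ^ 2) / x)
      = Real.exp (-x ^ 2) / (2 * x) := by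
    rw [integral_div, integral_mul_expsq]; ring
  unfold erfc
  calc 2 / Real.sqrt Real.pi * ∫ u in Set.Ioi x, Real.exp (-u ^ 2)
      ≤ 2 / Real.sqrt Real.pi * (Real.exp (-x ^ 2) / (2 * x)) := by
        apply mul_le_mul_of_nonneg_left _ (by positivity)
        rw [← hval]; exact hmono
    _ = Real.exp (-x ^ 2) / (Real.sqrt Real.pi * x) := by
        field_simp

/-- (Corollary 3: asymptotic value of the impulse response without backward reaction and
degradation.) For `k_f > 0`, `r0 > 1`, and `α = 1 + k_f/(4π)`, the channel impulse response
`P_AC(t) = (1/r0)·(k_f/(k_f+4π))·( erfc((r0−1)/(2√t)) − W((r0−1)/(2√t), α·√t) )` converges,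
as `t → ∞`, to the steady-state value `(1/r0)·k_f/(k_f + 4π)`. -/
theorem impulse_response_steady_state_value
    (k_f r0 : ℝ) (hkf : 0 < k_f) (hr0 : 1 < r0) :
    Tendsto (fun t : ℝ =>
        (1 / r0) * (k_f / (k_f + 4 * Real.pi)) *
          (erfc ((r0 - 1) / (2 * Real.sqrt t))
            - W ((r0 - 1) / (2 * Real.sqrt t)) ((1 + k_f / (4 * Real.pi)) * Real.sqrt t)))
      atTop
      (𝓝 ((1 / r0) * k_f / (k_f + 4 * Real.pi))) := by
  have hπ : (0:ℝ) < Real.pi := Real.pi_pos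
  have hπs : (0:ℝ) < Real.sqrt Real.pi := Real.sqrt_pos.2 hπ
  have hα : (0:ℝ) < 1 + k_f / (4 * Real.pi) := by positivity
  have hsqrt : Tendsto Real.sqrt atTop atTop := by
    apply tendsto_atTop_atTop.2
    intro b
    refine ⟨max 0 b ^ 2, fun a ha => ?_⟩
    have h1 : max 0 b ≤ Real.sqrt a := by
      rw [← Real.sqrt_sq (le_max_left 0 b)]
      exact Real.sqrt_le_sqrt ha
    exact (le_max_right 0 b).trans h1
  have hn0 : ∀ t : ℝ, 0 ≤ (r0 - 1) / (2 * Real.sqrt t) := fun t =>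
    div_nonneg (by linarith) (by positivity)
  have hnto : Tendsto (fun t : ℝ => (r0 - 1) / (2 * Real.sqrt t)) atTop (𝓝 0) :=
    Tendsto.div_atTop tendsto_const_nhds (hsqrt.const_mul_atTop two_pos)
  -- erfc term tends to 1
  have hA : Tendsto (fun t : ℝ => erfc ((r0 - 1) / (2 * Real.sqrt t))) atTop (𝓝 1) := by
    apply tendsto_of_tendsto_of_tendsto_of_le_of_le'
      (g := fun t : ℝ => 1 - 2 / Real.sqrt Real.pi * ((r0 - 1) / (2 * Real.sqrt t)))
      (h := fun _ : ℝ => (1:ℝ))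
    · simpa using (tendsto_const_nhds.sub (hnto.const_mul (2 / Real.sqrt Real.pi)) :
        Tendsto (fun t : ℝ => 1 - 2 / Real.sqrt Real.pi * ((r0 - 1) / (2 * Real.sqrt t)))
          atTop (𝓝 (1 - 2 / Real.sqrt Real.pi * 0)))
    · exact tendsto_const_nhds
    · filter_upwards with t using one_sub_le_erfc' (hn0 t)
    · filter_upwards with t using erfc_le_one' (hn0 t)
  -- W term tends to 0
  have hB : Tendsto (fun t : ℝ =>
      W ((r0 - 1) / (2 * Real.sqrt t)) ((1 + k_f / (4 * Real.pi)) * Real.sqrt t))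
      atTop (𝓝 0) := by
    apply tendsto_of_tendsto_of_tendsto_of_le_of_le'
      (g := fun _ : ℝ => (0:ℝ))
      (h := fun t : ℝ => 1 / (Real.sqrt Real.pi * ((1 + k_f / (4 * Real.pi)) * Real.sqrt t)))
    · exact tendsto_const_nhds
    · exact Tendsto.div_atTop tendsto_const_nhds
        ((hsqrt.const_mul_atTop hα).const_mul_atTop hπs)
    · filter_upwards with t
      exact mul_nonneg (Real.exp_nonneg _) (erfc_nonneg' _)
    · filter_upwards [eventually_gt_atTop (0:ℝ)] with t ht
      set nn : ℝ := (r0 - 1) / (2 * Real.sqrt t) with hnn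
      set mm : ℝ := (1 + k_f / (4 * Real.pi)) * Real.sqrt t with hmm
      have hm0 : 0 < mm := mul_pos hα (Real.sqrt_pos.2 ht)
      have hnn0 : 0 ≤ nn := hn0 t
      have hnm : 0 < nn + mm := by linarith
      calc W nn mm = Real.exp (2 * nn * mm + mm ^ 2) * erfc (nn + mm) := rfl
        _ ≤ Real.exp (2 * nn * mm + mm ^ 2) *
            (Real.exp (-(nn + mm) ^ 2) / (Real.sqrt Real.pi * (nn + mm))) :=
          mul_le_mul_of_nonneg_left (erfc_le_exp hnm) (Real.exp_nonneg _)
        _ = Real.exp (-nn ^ 2) / (Real.sqrt Real.pi * (nn + mm)) := by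
          rw [mul_div_assoc', ← Real.exp_add]
          congr 2
          ring
        _ ≤ 1 / (Real.sqrt Real.pi * mm) := by
          apply div_le_div₀ zero_le_one _ (by positivity)
          · apply mul_le_mul_of_nonneg_left _ hπs.le
            linarith
          · exact Real.exp_le_one_iff.2 (by nlinarith)
  have hfinal : (1 / r0) * (k_f / (k_f + 4 * Real.pi)) * (1 - 0)
      = (1 / r0) * k_f / (k_f + 4 * Real.pi) := by ring
  rw [← hfinal]
  exact (hA.sub hB).const_mul _
end
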